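/- In the polynomial ring ℂ[u₁,…,u₅], let I be the ideal generated by R_i = u_i + u_{i+2}u_{i+3} − 1 for i = 1,…,5 (indices mod 5). Then the quotient ℂ[u₁,…,u₅]/I is an integral domain of Krull dimension 2. -/

import Mathlib

open MvPolynomial

/-- The ideal of `ℂ[u₁,…,u₅]` generated by the pentagon relations
`R_i = u_i + u_{i+2} u_{i+3} − 1` (indices mod 5). -/
noncomputable def pentagonIdeal : Ideal (MvPolynomial (Fin 5) ℂ) :=
  Ideal.span (Set.range fun i : Fin 5 =>
    (X i : MvPolynomial (Fin 5) ℂ) + X (i + 2) * X (i + 3) - 1)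

attribute [local instance] MvPolynomial.algebraMvPolynomial

section Helpers

variable {A B : Type*} [CommRing A] [CommRing B]

lemma comap_equiv_strictMono (e : A ≃+* B) {p q : Ideal B} (h : p < q) :
    p.comap (e : A →+* B) < q.comap (e : A →+* B) := by
  refine lt_of_le_of_ne (Ideal.comap_mono h.le) (fun hc => h.ne ?_)
  have := congrArg (Ideal.comap (e.symm : B →+* A)) hc
  rwa [Ideal.comap_comap, Ideal.comap_comap,
    (by ext x; simp : (e : A →+* B).comp (e.symm : B →+* A) = RingHom.id B),
    Ideal.comap_id, Ideal.comap_id] at this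

end Helpers

section FactMax

variable {n : ℕ} {L : Type*} [Field L]

/-- A prime of `L[x₁..xₙ]` meeting every coordinate subring nontrivially is maximal. -/
lemma factMax (P : Ideal (MvPolynomial (Fin n) L)) (hP : P.IsPrime)
    (h : ∀ i : Fin n, ∃ g : Polynomial L, g ≠ 0 ∧ Polynomial.aeval (X i) g ∈ P) :
    P.IsMaximal := by
  haveI := hP
  set A := MvPolynomial (Fin n) L ⧸ P
  have hint : ∀ i : Fin n, IsIntegral L ((Ideal.Quotient.mkₐ L P) (X i)) := by
    intro i
    obtain ⟨g, hg0, hgP⟩ := h i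
    refine IsAlgebraic.isIntegral ⟨g, hg0, ?_⟩
    rw [Polynomial.aeval_algHom_apply]
    rw [show Polynomial.aeval (X i) g ∈ P ↔ Ideal.Quotient.mk P (Polynomial.aeval (X i) g) = 0
      from (Ideal.Quotient.eq_zero_iff_mem).symm] at hgP
    exact hgP
  have hadj : Algebra.adjoin L (Set.range fun i : Fin n => (Ideal.Quotient.mkₐ L P) (X i)) = ⊤ := by
    have h1 : (Algebra.adjoin L (Set.range (X : Fin n → MvPolynomial (Fin n) L))).map
        (Ideal.Quotient.mkₐ L P) = ⊤ := by
      rw [MvPolynomial.adjoin_range_X, Algebra.map_top, AlgHom.range_eq_top]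
      exact Ideal.Quotient.mkₐ_surjective L P
    rw [← h1, AlgHom.map_adjoin, ← Set.range_comp]
    rfl
  haveI : Algebra.IsIntegral L A := by
    refine ⟨fun a => ?_⟩
    refine IsIntegral.of_mem_of_fg (Algebra.adjoin L
      (Set.range fun i : Fin n => (Ideal.Quotient.mkₐ L P) (X i)))
      (fg_adjoin_of_finite (Set.finite_range _) ?_) a (by rw [hadj]; trivial)
    rintro x ⟨i, rfl⟩
    exact hint i
  exact Ideal.Quotient.maximal_of_isField P
    (isField_of_isIntegral_of_isField' (Field.toIsField L))

end FactMax

variable {A B : Type*} [CommRing A] [CommRing B]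

/-- Splitting off the first variable into the base. -/
noncomputable def splitE (n : ℕ) (L : Type*) [CommRing L] :
    MvPolynomial (Fin (n+1)) L ≃ₐ[L] MvPolynomial (Fin n) (Polynomial L) :=
  (renameEquiv L (_root_.finSuccEquiv n)).trans (optionEquivRight L (Fin n))

lemma splitE_aeval (n : ℕ) {L : Type*} [CommRing L] (g : Polynomial L) :
    splitE n L (Polynomial.aeval (X (0 : Fin (n+1))) g) = C g := by
  have h : ((splitE n L).toAlgHom.comp (Polynomial.aeval (X (0 : Fin (n+1))))) =
      IsScalarTower.toAlgHom L (Polynomial L) (MvPolynomial (Fin n) (Polynomial L)) := by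
    apply Polynomial.algHom_ext
    simp [splitE, finSuccEquiv_zero, optionEquivRight_X_none]
  have := DFunLike.congr_fun h g
  simpa [MvPolynomial.algebraMap_eq] using this

set_option maxHeartbeats 1000000 in
lemma locChain (n : ℕ) (L : Type*) [Field L] (Q : Ideal (MvPolynomial (Fin (n+1)) L))
    (hQ : Q.IsPrime)
    (hmiss : ∀ g : Polynomial L, Polynomial.aeval (X (0 : Fin (n+1))) g ∈ Q → g = 0) :
    ∃ T : Ideal (MvPolynomial (Fin (n+1)) L) →
        Ideal (MvPolynomial (Fin n) (FractionRing (Polynomial L))),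
      (∀ P, P.IsPrime → P ≤ Q → (T P).IsPrime) ∧
      (∀ P P', P.IsPrime → P'.IsPrime → P ≤ Q → P' ≤ Q → P < P' → T P < T P') := by
  classical
  set R := Polynomial L with hR
  set F := FractionRing R with hF
  set B := MvPolynomial (Fin n) R with hB
  set B' := MvPolynomial (Fin n) F with hB'
  let e : MvPolynomial (Fin (n+1)) L ≃+* B := (splitE n L).toRingEquiv
  set M : Submonoid B := (nonZeroDivisors R).map (C : R →+* B) with hM
  haveI hloc : IsLocalization M B' := MvPolynomial.isLocalization (nonZeroDivisors R) F
  have key : ∀ r : R, ((e.symm : B →+* MvPolynomial (Fin (n+1)) L) (C r))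
      = Polynomial.aeval (X (0 : Fin (n+1))) r := by
    intro r
    have h2 : e (Polynomial.aeval (X (0 : Fin (n+1))) r) = C r := splitE_aeval n (L := L) r
    show e.symm (C r) = _
    rw [← h2, e.symm_apply_apply]
  have hdisj : ∀ P : Ideal (MvPolynomial (Fin (n+1)) L), P ≤ Q →
      Disjoint (M : Set B) ((P.comap (e.symm : B →+* _)) : Set B) := by
    intro P hPQ
    rw [Set.disjoint_left]
    rintro m ⟨r, hr, rfl⟩ hm
    have hm' : (e.symm : B →+* _) (C r) ∈ P := Ideal.mem_comap.mp hm
    have h1 : Polynomial.aeval (X (0 : Fin (n+1))) r ∈ Q := key r ▸ hPQ hm' 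
    exact nonZeroDivisors.ne_zero hr (hmiss _ h1)
  refine ⟨fun P => (P.comap (e.symm : B →+* _)).map (algebraMap B B'), ?_, ?_⟩
  · intro P hP hPQ
    haveI := hP
    exact IsLocalization.isPrime_of_isPrime_disjoint M B' _ inferInstance (hdisj P hPQ)
  · intro P P' hP hP' hPQ hP'Q hlt
    haveI := hP; haveI := hP'
    have h1 : P.comap (e.symm : B →+* _) < P'.comap (e.symm : B →+* _) :=
      comap_equiv_strictMono e.symm hlt
    refine lt_of_le_of_ne (Ideal.map_mono h1.le) (fun hEq => h1.ne ?_)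
    have c1 := IsLocalization.comap_map_of_isPrime_disjoint M B'
      (I := P.comap (e.symm : B →+* _)) inferInstance (hdisj P hPQ)
    have c2 := IsLocalization.comap_map_of_isPrime_disjoint M B'
      (I := P'.comap (e.symm : B →+* _)) inferInstance (hdisj P' hP'Q)
    have hEq' : Ideal.map (algebraMap B B') (Ideal.comap (e.symm : B →+* _) P) =
        Ideal.map (algebraMap B B') (Ideal.comap (e.symm : B →+* _) P') := hEq
    rw [← c1, ← c2, hEq']

section NoChain

open MvPolynomial

variable {L : Type*} [Field L]

lemma noChain1 (r0 r1 r2 : Ideal (MvPolynomial (Fin 1) L))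
    (h0 : r0.IsPrime) (h1 : r1.IsPrime) (h2 : r2.IsPrime)
    (h01 : r0 < r1) (h12 : r1 < r2) : False := by
  obtain ⟨h, hh1, hh0⟩ := SetLike.exists_of_lt h01
  have hne : h ≠ 0 := fun hz => hh0 (hz ▸ r0.zero_mem)
  let ζ : MvPolynomial (Fin 1) L →ₐ[L] Polynomial L := aeval (fun _ => Polynomial.X)
  let ξ : Polynomial L →ₐ[L] MvPolynomial (Fin 1) L := Polynomial.aeval (X 0)
  have hcomp : ∀ p : MvPolynomial (Fin 1) L, ξ (ζ p) = p := by
    intro p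
    have hext : ξ.comp ζ = AlgHom.id L _ := by
      apply MvPolynomial.algHom_ext
      intro i
      have : i = 0 := Subsingleton.elim i 0
      subst this
      simp [ζ, ξ]
    exact DFunLike.congr_fun hext p
  have hmax : r1.IsMaximal := by
    refine factMax r1 h1 (fun i => ⟨ζ h, fun hz => hne (by rw [← hcomp h, hz, map_zero]), ?_⟩)
    have : i = 0 := Subsingleton.elim i 0
    subst this
    show ξ (ζ h) ∈ r1
    rw [hcomp]; exact hh1
  exact h12.ne (hmax.eq_of_le h2.ne_top h12.le)

lemma noChain2 (q0 q1 q2 : Ideal (MvPolynomial (Fin 2) L))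
    (h0 : q0.IsPrime) (h1 : q1.IsPrime) (h2 : q2.IsPrime)
    (hbot : q0 ≠ ⊥) (h01 : q0 < q1) (h12 : q1 < q2) : False := by
  by_cases hmeet : ∀ i : Fin 2, ∃ g : Polynomial L, g ≠ 0 ∧ Polynomial.aeval (X i) g ∈ q1
  · exact h12.ne ((factMax q1 h1 hmeet).eq_of_le h2.ne_top h12.le)
  push_neg at hmeet
  obtain ⟨i, hi⟩ := hmeet
  let e : MvPolynomial (Fin 2) L ≃+* MvPolynomial (Fin 2) L :=
    (renameEquiv L (Equiv.swap (0 : Fin 2) i)).toRingEquiv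
  have hkey : ∀ p : Polynomial L, (e : MvPolynomial (Fin 2) L →+* MvPolynomial (Fin 2) L)
      (Polynomial.aeval (X (0 : Fin 2)) p) = Polynomial.aeval (X i) p := by
    intro p
    have h := Polynomial.aeval_algHom_apply
      ((renameEquiv L (Equiv.swap (0 : Fin 2) i)).toAlgHom) (X (0 : Fin 2)) p
    rw [show (renameEquiv L (Equiv.swap (0 : Fin 2) i)).toAlgHom (X (0 : Fin 2)) = X i by
      simp [rename_X, Equiv.swap_apply_left]] at h
    exact h.symm
  set q0' := q0.comap (e : MvPolynomial (Fin 2) L →+* MvPolynomial (Fin 2) L) with hq0'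
  set q1' := q1.comap (e : MvPolynomial (Fin 2) L →+* MvPolynomial (Fin 2) L) with hq1'
  haveI := h0; haveI := h1
  have hp0' : q0'.IsPrime := inferInstance
  have hp1' : q1'.IsPrime := inferInstance
  have h01' : q0' < q1' := comap_equiv_strictMono e h01
  have hbot' : (⊥ : Ideal (MvPolynomial (Fin 2) L)) < q0' := by
    rcases (Submodule.ne_bot_iff _).mp hbot with ⟨x, hx, hxne⟩
    refine bot_lt_iff_ne_bot.mpr ((Submodule.ne_bot_iff _).mpr ⟨e.symm x, ?_, ?_⟩)
    · show (e : MvPolynomial (Fin 2) L →+* MvPolynomial (Fin 2) L) (e.symm x) ∈ q0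
      simpa using hx
    · intro hz
      exact hxne (by rw [← e.apply_symm_apply x, hz, map_zero])
  have hmiss : ∀ g : Polynomial L, Polynomial.aeval (X (0 : Fin 2)) g ∈ q1' → g = 0 := by
    intro g hg
    by_contra hgne
    refine hi g hgne ?_
    have h2 := Ideal.mem_comap.mp hg
    rwa [hkey g] at h2
  obtain ⟨T, hTprime, hTmono⟩ := locChain 1 L q1' hp1' hmiss
  exact noChain1 (T ⊥) (T q0') (T q1')
    (hTprime ⊥ Ideal.bot_prime bot_le) (hTprime q0' hp0' h01'.le) (hTprime q1' hp1' le_rfl)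
    (hTmono ⊥ q0' Ideal.bot_prime hp0' bot_le h01'.le hbot')
    (hTmono q0' q1' hp0' hp1' h01'.le le_rfl h01')

lemma noChain3 (p0 p1 p2 p3 : Ideal (MvPolynomial (Fin 3) L))
    (h0 : p0.IsPrime) (h1 : p1.IsPrime) (h2 : p2.IsPrime) (h3 : p3.IsPrime)
    (hbot : p0 ≠ ⊥) (h01 : p0 < p1) (h12 : p1 < p2) (h23 : p2 < p3) : False := by
  by_cases hmeet : ∀ i : Fin 3, ∃ g : Polynomial L, g ≠ 0 ∧ Polynomial.aeval (X i) g ∈ p2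
  · exact h23.ne ((factMax p2 h2 hmeet).eq_of_le h3.ne_top h23.le)
  push_neg at hmeet
  obtain ⟨i, hi⟩ := hmeet
  let e : MvPolynomial (Fin 3) L ≃+* MvPolynomial (Fin 3) L :=
    (renameEquiv L (Equiv.swap (0 : Fin 3) i)).toRingEquiv
  have hkey : ∀ p : Polynomial L, (e : MvPolynomial (Fin 3) L →+* MvPolynomial (Fin 3) L)
      (Polynomial.aeval (X (0 : Fin 3)) p) = Polynomial.aeval (X i) p := by
    intro p
    have h := Polynomial.aeval_algHom_apply
      ((renameEquiv L (Equiv.swap (0 : Fin 3) i)).toAlgHom) (X (0 : Fin 3)) p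
    rw [show (renameEquiv L (Equiv.swap (0 : Fin 3) i)).toAlgHom (X (0 : Fin 3)) = X i by
      simp [rename_X, Equiv.swap_apply_left]] at h
    exact h.symm
  set p0' := p0.comap (e : MvPolynomial (Fin 3) L →+* MvPolynomial (Fin 3) L) with hp0d
  set p1' := p1.comap (e : MvPolynomial (Fin 3) L →+* MvPolynomial (Fin 3) L) with hp1d
  set p2' := p2.comap (e : MvPolynomial (Fin 3) L →+* MvPolynomial (Fin 3) L) with hp2d
  haveI := h0; haveI := h1; haveI := h2
  have hq0 : p0'.IsPrime := inferInstance
  have hq1 : p1'.IsPrime := inferInstance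
  have hq2 : p2'.IsPrime := inferInstance
  have h01' : p0' < p1' := comap_equiv_strictMono e h01
  have h12' : p1' < p2' := comap_equiv_strictMono e h12
  have hbot' : (⊥ : Ideal (MvPolynomial (Fin 3) L)) < p0' := by
    rcases (Submodule.ne_bot_iff _).mp hbot with ⟨x, hx, hxne⟩
    refine bot_lt_iff_ne_bot.mpr ((Submodule.ne_bot_iff _).mpr ⟨e.symm x, ?_, ?_⟩)
    · show (e : MvPolynomial (Fin 3) L →+* MvPolynomial (Fin 3) L) (e.symm x) ∈ p0
      simpa using hx
    · intro hz
      exact hxne (by rw [← e.apply_symm_apply x, hz, map_zero])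
  have hmiss : ∀ g : Polynomial L, Polynomial.aeval (X (0 : Fin 3)) g ∈ p2' → g = 0 := by
    intro g hg
    by_contra hgne
    refine hi g hgne ?_
    have h2 := Ideal.mem_comap.mp hg
    rwa [hkey g] at h2
  obtain ⟨T, hTprime, hTmono⟩ := locChain 2 L p2' hq2 hmiss
  have hTb : T ⊥ < T p0' :=
    hTmono ⊥ p0' Ideal.bot_prime hq0 bot_le (h01'.le.trans h12'.le) hbot'
  refine noChain2 (T p0') (T p1') (T p2')
    (hTprime p0' hq0 (h01'.le.trans h12'.le)) (hTprime p1' hq1 h12'.le) (hTprime p2' hq2 le_rfl)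
    (((bot_le (a := T ⊥)).trans_lt hTb).ne')
    (hTmono p0' p1' hq0 hq1 (h01'.le.trans h12'.le) h12'.le h01')
    (hTmono p1' p2' hq1 hq2 h12'.le le_rfl h12')

end NoChain
section Concrete

open MvPolynomial

noncomputable def f3 : MvPolynomial (Fin 3) ℂ :=
  X 0 + X 2 - X 0 * X 1 * X 2 - 1

noncomputable def I3 : Ideal (MvPolynomial (Fin 3) ℂ) := Ideal.span {f3}

lemma f3_ne_zero : f3 ≠ 0 := by
  intro h
  have := congrArg (eval (fun _ => (0 : ℂ))) h
  simp [f3] at this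

lemma irred_linear {R : Type*} [CommRing R] [IsDomain R] {a b : R} (ha : a ≠ 0)
    (h : ∀ c : R, c ∣ a → c ∣ b → IsUnit c) :
    Irreducible (Polynomial.C a * Polynomial.X + Polynomial.C b) := by
  have hdeg : (Polynomial.C a * Polynomial.X + Polynomial.C b).natDegree = 1 :=
    Polynomial.natDegree_linear ha
  constructor
  · intro hu
    have := Polynomial.natDegree_eq_zero_of_isUnit hu
    omega
  · intro p q hpq
    have hne : Polynomial.C a * Polynomial.X + Polynomial.C b ≠ 0 := fun h0 => by
      rw [h0] at hdeg; simp at hdeg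
    have hp0 : p ≠ 0 := fun h0 => hne (by rw [hpq, h0, zero_mul])
    have hq0 : q ≠ 0 := fun h0 => hne (by rw [hpq, h0, mul_zero])
    have hsum : p.natDegree + q.natDegree = 1 := by
      rw [← Polynomial.natDegree_mul hp0 hq0, ← hpq, hdeg]
    rcases Nat.eq_zero_or_pos p.natDegree with hp | hp
    · obtain ⟨c, rfl⟩ := Polynomial.natDegree_eq_zero.mp hp
      left
      rw [Polynomial.isUnit_C]
      have e1 : c * q.coeff 1 = a := by
        have h' := congrArg (fun r : Polynomial R => r.coeff 1) hpq
        simp only [Polynomial.coeff_add, Polynomial.coeff_C_mul, Polynomial.coeff_X_one,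
          Polynomial.coeff_C, if_neg (one_ne_zero), mul_one, add_zero] at h'
        exact h'.symm
      have e0 : c * q.coeff 0 = b := by
        have h' := congrArg (fun r : Polynomial R => r.coeff 0) hpq
        simp only [Polynomial.coeff_add, Polynomial.coeff_C_mul, Polynomial.coeff_X_zero,
          Polynomial.coeff_C, if_pos rfl, mul_zero, zero_add] at h'
        exact h'.symm
      exact h c ⟨q.coeff 1, e1.symm⟩ ⟨q.coeff 0, e0.symm⟩
    · have hq : q.natDegree = 0 := by omega
      obtain ⟨c, rfl⟩ := Polynomial.natDegree_eq_zero.mp hq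
      right
      rw [Polynomial.isUnit_C]
      have e1 : c * p.coeff 1 = a := by
        have h' := congrArg (fun r : Polynomial R => r.coeff 1) hpq
        simp only [Polynomial.coeff_add, Polynomial.coeff_C_mul, Polynomial.coeff_X_one,
          Polynomial.coeff_C, if_neg (one_ne_zero), mul_one, add_zero,
          Polynomial.coeff_mul_C] at h'
        rw [mul_comm]
        exact h'.symm
      have e0 : c * p.coeff 0 = b := by
        have h' := congrArg (fun r : Polynomial R => r.coeff 0) hpq
        simp only [Polynomial.coeff_add, Polynomial.coeff_C_mul, Polynomial.coeff_X_zero,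
          Polynomial.coeff_C, if_pos rfl, mul_zero, zero_add, Polynomial.coeff_mul_C] at h'
        rw [mul_comm]
        exact h'.symm
      exact h c ⟨p.coeff 1, e1.symm⟩ ⟨p.coeff 0, e0.symm⟩

lemma prime_one_sub_X0 : Prime (1 - X (0 : Fin 2) : MvPolynomial (Fin 2) ℂ) := by
  have h : Prime (X (0 : Fin 2) - 1 : MvPolynomial (Fin 2) ℂ) := by
    rw [← MulEquiv.prime_iff (MvPolynomial.finSuccEquiv ℂ 1).toMulEquiv]
    have hX : (MvPolynomial.finSuccEquiv ℂ 1).toMulEquiv (X (0 : Fin 2) - 1)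
        = Polynomial.X - Polynomial.C 1 := by
      show (MvPolynomial.finSuccEquiv ℂ 1) (X (0 : Fin 2) - 1) = _
      rw [map_sub, MvPolynomial.finSuccEquiv_X_zero, map_one, Polynomial.C_1]
    rw [hX]
    exact Polynomial.prime_X_sub_C 1
  have := h.neg
  rwa [neg_sub] at this

lemma cop_aux : ∀ c : MvPolynomial (Fin 2) ℂ,
    c ∣ (1 - X 0 * X 1) → c ∣ (X 1 - 1) → IsUnit c := by
  intro c h1 h2
  have h3 : c ∣ (1 - X (0 : Fin 2) : MvPolynomial (Fin 2) ℂ) := by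
    have heq : (1 - X 0 * X 1) + X 0 * (X 1 - 1) = (1 - X (0 : Fin 2) : MvPolynomial (Fin 2) ℂ) := by
      ring
    exact heq ▸ dvd_add h1 (h2.mul_left _)
  obtain ⟨d, hd⟩ := h3
  rcases prime_one_sub_X0.irreducible.isUnit_or_isUnit hd with hc | hdu
  · exact hc
  · exfalso
    obtain ⟨k, hk⟩ := h2
    have heq2 : (X 1 - 1 : MvPolynomial (Fin 2) ℂ) * d = (1 - X 0) * k := by
      rw [hk, hd]; ring
    have := congrArg (eval ![1, 0]) heq2
    simp at this
    exact (hdu.map (eval ![(1 : ℂ), 0])).ne_zero this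

lemma prime_f3 : Prime f3 := by
  rw [← UniqueFactorizationMonoid.irreducible_iff_prime]
  rw [← MulEquiv.irreducible_iff ((MvPolynomial.finSuccEquiv ℂ 2).toMulEquiv)]
  have hX : (MvPolynomial.finSuccEquiv ℂ 2).toMulEquiv f3
      = Polynomial.C (1 - X 0 * X 1) * Polynomial.X + Polynomial.C (X 1 - 1) := by
    show (MvPolynomial.finSuccEquiv ℂ 2) f3 = _
    have h1 : (1 : Fin 3) = (0 : Fin 2).succ := rfl
    have h2 : (2 : Fin 3) = (1 : Fin 2).succ := rfl
    rw [f3, map_sub, map_sub, map_add, map_mul, map_mul, map_one,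
      MvPolynomial.finSuccEquiv_X_zero, h1, h2,
      MvPolynomial.finSuccEquiv_X_succ, MvPolynomial.finSuccEquiv_X_succ]
    simp only [map_sub, map_mul, map_one, Polynomial.C_sub, Polynomial.C_mul, Polynomial.C_1]
    ring
  rw [hX]
  refine irred_linear ?_ cop_aux
  intro h
  have := congrArg (eval (fun _ => (0 : ℂ))) h
  simp at this

end Concrete
section Iso

open MvPolynomial

lemma f3_def : f3 = X 0 + X 2 - X 0 * X 1 * X 2 - 1 := rfl

lemma penta_mem (i : Fin 5) :
    (X i + X (i + 2) * X (i + 3) - 1 : MvPolynomial (Fin 5) ℂ) ∈ pentagonIdeal :=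
  Ideal.subset_span ⟨i, rfl⟩

noncomputable def alphaHom : MvPolynomial (Fin 5) ℂ →ₐ[ℂ] MvPolynomial (Fin 3) ℂ :=
  aeval ![X 0, X 1, X 2, 1 - X 0 * X 1, 1 - X 1 * X 2]

noncomputable def betaHom : MvPolynomial (Fin 3) ℂ →ₐ[ℂ] MvPolynomial (Fin 5) ℂ :=
  aeval ![X 0, X 1, X 2]

lemma alpha_le : pentagonIdeal ≤ I3.comap alphaHom.toRingHom := by
  rw [pentagonIdeal, Ideal.span_le]
  rintro x ⟨i, rfl⟩
  have hmem : ∀ y : MvPolynomial (Fin 3) ℂ, f3 ∣ y → y ∈ I3 := by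
    intro y hy
    rw [I3, Ideal.mem_span_singleton]
    exact hy
  fin_cases i
  · show alphaHom (X 0 + X 2 * X 3 - 1) ∈ I3
    refine hmem _ ⟨1, ?_⟩
    simp only [alphaHom, map_sub, map_add, map_mul, map_one, aeval_X]
    simp only [Matrix.cons_val_zero, Matrix.cons_val_one, Matrix.head_cons,
      Matrix.cons_val_two, Matrix.tail_cons, Matrix.cons_val_three, Matrix.cons_val_four]
    rw [f3_def]; ring
  · show alphaHom (X 1 + X 3 * X 4 - 1) ∈ I3
    refine hmem _ ⟨-X 1, ?_⟩
    simp only [alphaHom, map_sub, map_add, map_mul, map_one, aeval_X]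
    simp only [Matrix.cons_val_zero, Matrix.cons_val_one, Matrix.head_cons,
      Matrix.cons_val_two, Matrix.tail_cons, Matrix.cons_val_three, Matrix.cons_val_four]
    rw [f3_def]; ring
  · show alphaHom (X 2 + X 4 * X 0 - 1) ∈ I3
    refine hmem _ ⟨1, ?_⟩
    simp only [alphaHom, map_sub, map_add, map_mul, map_one, aeval_X]
    simp only [Matrix.cons_val_zero, Matrix.cons_val_one, Matrix.head_cons,
      Matrix.cons_val_two, Matrix.tail_cons, Matrix.cons_val_three, Matrix.cons_val_four]
    rw [f3_def]; ring
  · show alphaHom (X 3 + X 0 * X 1 - 1) ∈ I3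
    refine hmem _ ⟨0, ?_⟩
    simp only [alphaHom, map_sub, map_add, map_mul, map_one, aeval_X]
    simp only [Matrix.cons_val_zero, Matrix.cons_val_one, Matrix.head_cons,
      Matrix.cons_val_two, Matrix.tail_cons, Matrix.cons_val_three, Matrix.cons_val_four]
    ring
  · show alphaHom (X 4 + X 1 * X 2 - 1) ∈ I3
    refine hmem _ ⟨0, ?_⟩
    simp only [alphaHom, map_sub, map_add, map_mul, map_one, aeval_X]
    simp only [Matrix.cons_val_zero, Matrix.cons_val_one, Matrix.head_cons,
      Matrix.cons_val_two, Matrix.tail_cons, Matrix.cons_val_three, Matrix.cons_val_four]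
    ring

lemma beta_le : I3 ≤ pentagonIdeal.comap betaHom.toRingHom := by
  rw [I3, Ideal.span_le]
  rintro x hx
  rw [Set.mem_singleton_iff] at hx
  subst hx
  show betaHom f3 ∈ pentagonIdeal
  have hg0 := penta_mem 0
  have hg3 := penta_mem 3
  rw [show ((0 : Fin 5) + 2) = 2 by decide, show ((0 : Fin 5) + 3) = 3 by decide] at hg0
  rw [show ((3 : Fin 5) + 2) = 0 by decide, show ((3 : Fin 5) + 3) = 1 by decide] at hg3
  have heq : betaHom f3 = (X 0 + X 2 * X 3 - 1) - X 2 * (X 3 + X 0 * X 1 - 1) := by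
    simp only [betaHom, f3_def, map_sub, map_add, map_mul, map_one, aeval_X]
    simp only [Matrix.cons_val_zero, Matrix.cons_val_one, Matrix.head_cons,
      Matrix.cons_val_two, Matrix.tail_cons]
    ring
  rw [heq]
  exact Ideal.sub_mem _ hg0 (Ideal.mul_mem_left _ _ hg3)

noncomputable def abar :
    (MvPolynomial (Fin 5) ℂ ⧸ pentagonIdeal) →ₐ[ℂ] (MvPolynomial (Fin 3) ℂ ⧸ I3) :=
  Ideal.Quotient.liftₐ pentagonIdeal ((Ideal.Quotient.mkₐ ℂ I3).comp alphaHom)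
    (fun a ha => by
      rw [AlgHom.comp_apply, Ideal.Quotient.mkₐ_eq_mk, Ideal.Quotient.eq_zero_iff_mem]
      exact alpha_le ha)

noncomputable def bbar :
    (MvPolynomial (Fin 3) ℂ ⧸ I3) →ₐ[ℂ] (MvPolynomial (Fin 5) ℂ ⧸ pentagonIdeal) :=
  Ideal.Quotient.liftₐ I3 ((Ideal.Quotient.mkₐ ℂ pentagonIdeal).comp betaHom)
    (fun a ha => by
      rw [AlgHom.comp_apply, Ideal.Quotient.mkₐ_eq_mk, Ideal.Quotient.eq_zero_iff_mem]
      exact beta_le ha)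

lemma abar_mk (p : MvPolynomial (Fin 5) ℂ) :
    abar (Ideal.Quotient.mk pentagonIdeal p) = Ideal.Quotient.mk I3 (alphaHom p) := by
  simp [abar, Ideal.Quotient.liftₐ_apply, Ideal.Quotient.lift_mk]
  rfl

lemma bbar_mk (p : MvPolynomial (Fin 3) ℂ) :
    bbar (Ideal.Quotient.mk I3 p) = Ideal.Quotient.mk pentagonIdeal (betaHom p) := by
  simp [bbar, Ideal.Quotient.liftₐ_apply, Ideal.Quotient.lift_mk]
  rfl

noncomputable def pentEquiv :
    (MvPolynomial (Fin 5) ℂ ⧸ pentagonIdeal) ≃ₐ[ℂ] (MvPolynomial (Fin 3) ℂ ⧸ I3) := by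
  refine AlgEquiv.ofAlgHom abar bbar ?_ ?_
  · apply Ideal.Quotient.algHom_ext
    apply MvPolynomial.algHom_ext
    intro i
    simp only [AlgHom.comp_apply, AlgHom.id_apply, Ideal.Quotient.mkₐ_eq_mk]
    rw [bbar_mk, abar_mk]
    fin_cases i <;> simp [alphaHom, betaHom]
  · apply Ideal.Quotient.algHom_ext
    apply MvPolynomial.algHom_ext
    intro i
    simp only [AlgHom.comp_apply, AlgHom.id_apply, Ideal.Quotient.mkₐ_eq_mk]
    rw [abar_mk, bbar_mk]
    fin_cases i
    · simp [alphaHom, betaHom]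
    · simp [alphaHom, betaHom]
    · simp [alphaHom, betaHom]
    · show (Ideal.Quotient.mk pentagonIdeal) (betaHom (alphaHom (X 3)))
          = (Ideal.Quotient.mk pentagonIdeal) (X 3)
      have hval : betaHom (alphaHom (X 3)) = 1 - X 0 * X 1 := by
        simp [alphaHom, betaHom]
      rw [hval, Ideal.Quotient.eq]
      have hg3 := penta_mem 3
      rw [show ((3 : Fin 5) + 2) = 0 by decide, show ((3 : Fin 5) + 3) = 1 by decide] at hg3
      have := neg_mem hg3
      convert this using 1
      ring
    · show (Ideal.Quotient.mk pentagonIdeal) (betaHom (alphaHom (X 4)))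
          = (Ideal.Quotient.mk pentagonIdeal) (X 4)
      have hval : betaHom (alphaHom (X 4)) = 1 - X 1 * X 2 := by
        simp [alphaHom, betaHom]
      rw [hval, Ideal.Quotient.eq]
      have hg4 := penta_mem 4
      rw [show ((4 : Fin 5) + 2) = 1 by decide, show ((4 : Fin 5) + 3) = 2 by decide] at hg4
      have := neg_mem hg4
      convert this using 1
      ring

end Iso
section Final

open MvPolynomial

lemma I3_prime : I3.IsPrime := (Ideal.span_singleton_prime f3_ne_zero).mpr prime_f3

noncomputable def lamHom : MvPolynomial (Fin 3) ℂ →ₐ[ℂ] Polynomial ℂ :=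
  aeval ![1, Polynomial.X, 0]

lemma lam_f3 : lamHom f3 = 0 := by
  simp only [lamHom, f3_def, map_sub, map_add, map_mul, map_one, aeval_X]
  simp only [Matrix.cons_val_zero, Matrix.cons_val_one, Matrix.head_cons,
    Matrix.cons_val_two, Matrix.tail_cons]
  ring

noncomputable def lam1 : (MvPolynomial (Fin 3) ℂ ⧸ I3) →ₐ[ℂ] Polynomial ℂ :=
  Ideal.Quotient.liftₐ I3 lamHom (fun a ha => by
    obtain ⟨c, rfl⟩ := Ideal.mem_span_singleton.mp (by rwa [I3] at ha)
    rw [map_mul, lam_f3, zero_mul])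

lemma lam1_mk (p : MvPolynomial (Fin 3) ℂ) :
    lam1 (Ideal.Quotient.mk I3 p) = lamHom p := by
  simp [lam1, Ideal.Quotient.liftₐ_apply, Ideal.Quotient.lift_mk]
  rfl

noncomputable def lam2 : (MvPolynomial (Fin 3) ℂ ⧸ I3) →ₐ[ℂ] ℂ :=
  (Polynomial.aeval (0 : ℂ)).comp lam1

lemma mk_X2_ne : Ideal.Quotient.mk I3 (X 2) ≠ 0 := by
  rw [Ne, Ideal.Quotient.eq_zero_iff_mem, I3, Ideal.mem_span_singleton]
  rintro ⟨c, hc⟩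
  have := congrArg (eval ![1, 1, 1]) hc
  simp [f3_def] at this

lemma dim_A3 : ringKrullDim (MvPolynomial (Fin 3) ℂ ⧸ I3) = 2 := by
  haveI := I3_prime
  set A3 := MvPolynomial (Fin 3) ℂ ⧸ I3 with hA3
  let P1 : Ideal A3 := RingHom.ker lam1.toRingHom
  let P2 : Ideal A3 := RingHom.ker lam2.toRingHom
  have hP1 : P1.IsPrime := RingHom.ker_isPrime _
  have hP2 : P2.IsPrime := RingHom.ker_isPrime _
  have h01 : (⊥ : Ideal A3) < P1 := by
    refine bot_lt_iff_ne_bot.mpr ((Submodule.ne_bot_iff _).mpr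
      ⟨Ideal.Quotient.mk I3 (X 2), ?_, mk_X2_ne⟩)
    show lam1 (Ideal.Quotient.mk I3 (X 2)) = 0
    rw [lam1_mk]
    simp [lamHom]
  have h12 : P1 < P2 := by
    rw [SetLike.lt_iff_le_and_exists]
    refine ⟨?_, Ideal.Quotient.mk I3 (X 1), ?_, ?_⟩
    · intro x hx
      have hx0 : lam1 x = 0 := hx
      show (Polynomial.aeval (0 : ℂ)) (lam1 x) = 0
      rw [hx0, map_zero]
    · show (Polynomial.aeval (0 : ℂ)) (lam1 (Ideal.Quotient.mk I3 (X 1))) = 0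
      rw [lam1_mk]
      simp [lamHom]
    · show ¬ lam1 (Ideal.Quotient.mk I3 (X 1)) = 0
      rw [lam1_mk]
      simp only [lamHom, aeval_X, Matrix.cons_val_one, Matrix.head_cons]
      exact Polynomial.X_ne_zero
  let SP : Fin 3 → PrimeSpectrum A3 := ![⟨⊥, Ideal.bot_prime⟩, ⟨P1, hP1⟩, ⟨P2, hP2⟩]
  have hstep : ∀ i : Fin 2, SP i.castSucc < SP i.succ := by
    intro i
    fin_cases i
    · show (⟨⊥, Ideal.bot_prime⟩ : PrimeSpectrum A3) < ⟨P1, hP1⟩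
      exact h01
    · show (⟨P1, hP1⟩ : PrimeSpectrum A3) < ⟨P2, hP2⟩
      exact h12
  have hge : (2 : WithBot (WithTop ℕ)) ≤ ringKrullDim A3 := by
    have := Order.LTSeries.length_le_krullDim (⟨2, SP, hstep⟩ : LTSeries (PrimeSpectrum A3))
    exact_mod_cast this
  have hup : ∀ s : LTSeries (PrimeSpectrum A3), s.length ≤ 2 := by
    intro s
    by_contra hlen
    push_neg at hlen
    have hmk : Function.Surjective (Ideal.Quotient.mk I3) := Ideal.Quotient.mk_surjective
    let Q : Fin 4 → Ideal A3 := fun k => (s ⟨k.1, by omega⟩).asIdeal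
    have hQlt : ∀ j k : Fin 4, j < k → Q j < Q k := by
      intro j k h
      exact s.strictMono (by simpa [Fin.mk_lt_mk] using h)
    have hQprime : ∀ k : Fin 4, (Q k).IsPrime := fun k => (s ⟨k.1, by omega⟩).isPrime
    let p : Fin 4 → Ideal (MvPolynomial (Fin 3) ℂ) := fun k =>
      (Q k).comap (Ideal.Quotient.mk I3)
    have hpprime : ∀ k, (p k).IsPrime := fun k => by
      haveI := hQprime k
      exact Ideal.IsPrime.comap _
    have hplt : ∀ j k : Fin 4, j < k → p j < p k := by
      intro j k h
      have hQ := hQlt j k h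
      refine lt_of_le_of_ne (Ideal.comap_mono hQ.le) (fun hEq => hQ.ne ?_)
      exact Ideal.comap_injective_of_surjective _ hmk hEq
    have hf3 : f3 ∈ p 0 := by
      show Ideal.Quotient.mk I3 f3 ∈ Q 0
      have hz : Ideal.Quotient.mk I3 f3 = 0 :=
        Ideal.Quotient.eq_zero_iff_mem.mpr (Ideal.subset_span rfl)
      rw [hz]
      exact (Q 0).zero_mem
    have hbot : p 0 ≠ ⊥ := fun hb => f3_ne_zero (by rw [hb] at hf3; simpa using hf3)
    exact noChain3 (p 0) (p 1) (p 2) (p 3) (hpprime 0) (hpprime 1) (hpprime 2) (hpprime 3)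
      hbot (hplt 0 1 (by decide)) (hplt 1 2 (by decide)) (hplt 2 3 (by decide))
  have hle : ringKrullDim A3 ≤ 2 := by
    rw [ringKrullDim, Order.krullDim_eq_iSup_length]
    have hsup : (⨆ (q : LTSeries (PrimeSpectrum A3)), (q.length : ℕ∞)) ≤ (2 : ℕ∞) :=
      iSup_le fun q => by exact_mod_cast hup q
    exact le_trans (WithBot.coe_le_coe.mpr hsup) (by norm_cast)
  exact le_antisymm hle hge

end Final

/-- **The partial compactification `𝓜̃_{A₂}`.** The quotient `ℂ[u₁,…,u₅]/I`, where `I` is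
generated by the five pentagon relations `u_i + u_{i+2}u_{i+3} − 1`, is an integral domain
of Krull dimension `2`. -/
theorem pentagon_ring_domain_dim_two :
    IsDomain (MvPolynomial (Fin 5) ℂ ⧸ pentagonIdeal) ∧
      ringKrullDim (MvPolynomial (Fin 5) ℂ ⧸ pentagonIdeal) = 2 := by
  haveI := I3_prime
  have e := pentEquiv.toRingEquiv
  constructor
  · exact MulEquiv.isDomain _ e.toMulEquiv
  · rw [ringKrullDim_eq_of_ringEquiv e, dim_A3]
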